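/- Let H be an r-uniform hypergraph with τ(H) = t (t ≥ 2) such that τ(H - e) ≤ t - 1 for every edge e. Then |E(H)| ≤ C(r + t - 1, r). -/

import Mathlib

open Finset Equiv

namespace TauCrit

variable {d : ℕ}

noncomputable def botSet (S : Finset (Fin d)) : Finset (Fin d) :=
  (Finset.range S.card).attachFin
    (fun m hm => lt_of_lt_of_le (Finset.mem_range.mp hm) (by simpa using S.card_le_univ))

lemma card_botSet (S : Finset (Fin d)) : (botSet S).card = S.card := by
  simp [botSet, Finset.card_attachFin]

lemma mem_botSet {S : Finset (Fin d)} {x : Fin d} : x ∈ botSet S ↔ (x : ℕ) < S.card := by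
  simp [botSet, Finset.mem_attachFin]

noncomputable def sortFun (S : Finset (Fin d)) : Fin d → Fin d :=
  fun x =>
    if h : x ∈ S then
      ((Finset.equivOfCardEq (card_botSet S).symm) ⟨x, h⟩ : (botSet S : Finset (Fin d)))
    else
      ((Finset.equivOfCardEq (by rw [Finset.card_compl, Finset.card_compl, card_botSet] :
          (Sᶜ : Finset (Fin d)).card = ((botSet S)ᶜ : Finset (Fin d)).card))
        ⟨x, by simpa using h⟩ : ((botSet S)ᶜ : Finset (Fin d)))

lemma sortFun_mem {S : Finset (Fin d)} {x : Fin d} (h : x ∈ S) :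
    sortFun S x ∈ botSet S := by
  simp only [sortFun, dif_pos h]
  exact Finset.coe_mem _

lemma sortFun_not_mem {S : Finset (Fin d)} {x : Fin d} (h : x ∉ S) :
    sortFun S x ∉ botSet S := by
  simp only [sortFun, dif_neg h]
  intro hc
  have := Finset.coe_mem ((Finset.equivOfCardEq (show (Sᶜ : Finset (Fin d)).card =
      ((botSet S)ᶜ : Finset (Fin d)).card by
        rw [Finset.card_compl, Finset.card_compl, card_botSet])) ⟨x, by simpa using h⟩)
  rw [Finset.mem_compl] at this
  exact this hc

lemma sortFun_inj (S : Finset (Fin d)) : Function.Injective (sortFun S) := by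
  intro x y hxy
  by_cases hx : x ∈ S <;> by_cases hy : y ∈ S
  · simp only [sortFun, dif_pos hx, dif_pos hy] at hxy
    have := (Finset.equivOfCardEq (card_botSet S).symm).injective (Subtype.coe_injective hxy)
    exact Subtype.mk_eq_mk.mp this
  · exact absurd (sortFun_mem hx) (hxy ▸ sortFun_not_mem hy ∘ (hxy ▸ ·))
  · exact absurd (sortFun_mem hy) (hxy ▸ sortFun_not_mem hx ∘ (hxy ▸ ·))
  · simp only [sortFun, dif_neg hx, dif_neg hy] at hxy
    have := (Finset.equivOfCardEq _).injective (Subtype.coe_injective hxy)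
    exact congrArg Subtype.val this

noncomputable def sortPerm (S : Finset (Fin d)) : Equiv.Perm (Fin d) :=
  Equiv.ofBijective (sortFun S) ((Finite.injective_iff_bijective).mp (sortFun_inj S))

lemma sortPerm_lt {S : Finset (Fin d)} {x : Fin d} (h : x ∈ S) :
    ((sortPerm S) x : ℕ) < S.card :=
  mem_botSet.mp (sortFun_mem h)

lemma sortPerm_ge {S : Finset (Fin d)} {x : Fin d} (h : x ∉ S) :
    S.card ≤ ((sortPerm S) x : ℕ) :=
  not_lt.mp (fun hc => sortFun_not_mem h (mem_botSet.mpr hc))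


variable {n : ℕ}

/-- The canonical permutation of `Fin n` moving `T` below `U`, identity outside `T ∪ U`. -/
noncomputable def rho (T U : Finset (Fin n)) : Equiv.Perm (Fin n) :=
  Equiv.Perm.subtypeCongr
    ((((T ∪ U).orderIsoOfFin rfl).toEquiv.symm.trans
        (sortPerm (Finset.univ.filter (fun j => (((T ∪ U).orderIsoOfFin rfl) j : Fin n) ∈ T)))).trans
      ((T ∪ U).orderIsoOfFin rfl).toEquiv)
    (Equiv.refl _)

lemma rho_not_mem {T U : Finset (Fin n)} {x : Fin n} (hx : x ∉ T ∪ U) :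
    rho T U x = x := by
  rw [rho, Equiv.Perm.subtypeCongr.right_apply _ _ hx]
  rfl

lemma card_filter_orderIso (T U : Finset (Fin n)) (hd : Disjoint T U) :
    (Finset.univ.filter (fun j : Fin (T ∪ U).card =>
      (((T ∪ U).orderIsoOfFin rfl) j : Fin n) ∈ T)).card = T.card := by
  apply Finset.card_bij (fun j _ => (((T ∪ U).orderIsoOfFin rfl) j : Fin n))
  · intro j hj; exact (Finset.mem_filter.mp hj).2
  · intro j₁ h₁ j₂ h₂ h
    exact ((T ∪ U).orderIsoOfFin rfl).injective (Subtype.coe_injective h)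
  · intro t ht
    refine ⟨((T ∪ U).orderIsoOfFin rfl).symm ⟨t, Finset.mem_union_left _ ht⟩, ?_, ?_⟩
    · simp only [Finset.mem_filter, Finset.mem_univ, true_and, OrderIso.apply_symm_apply]
      exact ht
    · simp [OrderIso.apply_symm_apply]

lemma rho_lt {T U : Finset (Fin n)} {x y : Fin n} (hd : Disjoint T U)
    (hx : x ∈ T) (hy : y ∈ U) : rho T U x < rho T U y := by
  have hxQ : x ∈ T ∪ U := Finset.mem_union_left _ hx
  have hyQ : y ∈ T ∪ U := Finset.mem_union_right _ hy
  set c := ((T ∪ U).orderIsoOfFin rfl) with hc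
  set S := (Finset.univ.filter (fun j : Fin (T ∪ U).card => (c j : Fin n) ∈ T)) with hS
  have hax : rho T U x = (c (sortPerm S (c.symm ⟨x, hxQ⟩)) : Fin n) := by
    rw [rho, Equiv.Perm.subtypeCongr.left_apply _ _ hxQ]; rfl
  have hay : rho T U y = (c (sortPerm S (c.symm ⟨y, hyQ⟩)) : Fin n) := by
    rw [rho, Equiv.Perm.subtypeCongr.left_apply _ _ hyQ]; rfl
  have hjx : c.symm ⟨x, hxQ⟩ ∈ S := by
    simp only [hS, Finset.mem_filter, Finset.mem_univ, true_and, OrderIso.apply_symm_apply]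
    exact hx
  have hjy : c.symm ⟨y, hyQ⟩ ∉ S := by
    simp only [hS, Finset.mem_filter, Finset.mem_univ, true_and, OrderIso.apply_symm_apply]
    exact fun hmem => (Finset.disjoint_left.mp hd) hmem hy
  have hlt : sortPerm S (c.symm ⟨x, hxQ⟩) < sortPerm S (c.symm ⟨y, hyQ⟩) :=
    Fin.lt_def.mpr (lt_of_lt_of_le (sortPerm_lt hjx) (sortPerm_ge hjy))
  rw [hax, hay]
  exact_mod_cast c.strictMono hlt


lemma image_perm_compl (σ : Equiv.Perm (Fin n)) (s : Finset (Fin n)) :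
    sᶜ.image σ = (s.image σ)ᶜ := by
  ext z
  simp only [Finset.mem_image, Finset.mem_compl]
  constructor
  · rintro ⟨w, hw, rfl⟩ ⟨v, hv, hvw⟩
    exact hw (σ.injective hvw ▸ hv)
  · intro hz
    exact ⟨σ.symm z, fun hmem => hz ⟨σ.symm z, hmem, σ.apply_symm_apply z⟩,
      σ.apply_symm_apply z⟩

lemma key (A B : Finset (Fin n)) (hAB : Disjoint A B) :
    Nat.factorial n ≤ (A.card + B.card).choose A.card *
      (Finset.univ.filter
        (fun σ : Equiv.Perm (Fin n) => ∀ x ∈ A, ∀ y ∈ B, σ x < σ y)).card := by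
  classical
  set D := A ∪ B with hD
  set φ : Equiv.Perm (Fin n) → Equiv.Perm (Fin n) :=
    fun σ => σ.trans (rho (A.image σ) (B.image σ)) with hφ
  have hdisj : ∀ σ : Equiv.Perm (Fin n), Disjoint (A.image σ) (B.image σ) :=
    fun σ => (Finset.disjoint_image σ.injective).mpr hAB
  have hoff : ∀ (σ : Equiv.Perm (Fin n)) (x : Fin n), x ∉ D → φ σ x = σ x := by
    intro σ x hx
    have hmem : σ x ∉ A.image σ ∪ B.image σ := by
      rw [← Finset.image_union]
      intro hmem
      obtain ⟨w, hw, hww⟩ := Finset.mem_image.mp hmem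
      exact hx (σ.injective hww ▸ hw)
    simpa [hφ] using rho_not_mem hmem
  have himg : ∀ σ, φ σ ∈ Finset.univ.filter
      (fun σ : Equiv.Perm (Fin n) => ∀ x ∈ A, ∀ y ∈ B, σ x < σ y) := by
    intro σ
    simp only [Finset.mem_filter, Finset.mem_univ, true_and]
    intro x hx y hy
    exact rho_lt (hdisj σ) (Finset.mem_image_of_mem σ hx) (Finset.mem_image_of_mem σ hy)
  have hDcard : D.card = A.card + B.card := Finset.card_union_of_disjoint hAB
  -- the fiber bound
  have hfib : ∀ σ' ∈ Finset.univ.image φ,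
      (Finset.univ.filter (fun σ => φ σ = σ')).card ≤ (A.card + B.card).choose A.card := by
    intro σ' _
    have hsub : (Finset.univ.filter (fun σ => φ σ = σ')).card ≤
        ((((Finset.univ \ D).image σ')ᶜ).powersetCard A.card).card := by
      refine Finset.card_le_card_of_injOn (fun σ => A.image (⇑σ)) ?_ ?_
      · -- maps to
        intro σ hσ
        rw [Finset.mem_coe, Finset.mem_filter] at hσ
        obtain ⟨-, hσ'⟩ := hσ
        rw [Finset.mem_coe, Finset.mem_powersetCard]
        constructor
        · intro z hz
          obtain ⟨x, hx, rfl⟩ := Finset.mem_image.mp hz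
          rw [Finset.mem_compl]
          intro hmem
          obtain ⟨w, hw, hww⟩ := Finset.mem_image.mp hmem
          rw [Finset.mem_sdiff] at hw
          rw [← hσ', hoff σ w hw.2] at hww
          exact hw.2 (Finset.mem_union_left _ (σ.injective hww ▸ hx))
        · exact Finset.card_image_of_injective _ σ.injective
      · -- injective on the fiber
        intro σ₁ h₁ σ₂ h₂ hT
        rw [Finset.coe_filter, Set.mem_setOf_eq] at h₁ h₂
        have h1 := h₁.2; have h2 := h₂.2
        have hT' : Finset.image (⇑σ₁) A = Finset.image (⇑σ₂) A := hT
        have hoffeq : ∀ x ∉ D, σ₁ x = σ₂ x := by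
          intro x hx
          rw [← hoff σ₁ x hx, ← hoff σ₂ x hx, h1, h2]
        have hQ : D.image σ₁ = D.image σ₂ := by
          have himg' : Dᶜ.image σ₁ = Dᶜ.image σ₂ :=
            Finset.image_congr (fun x hx => hoffeq x (by simpa using hx))
          have e1 := image_perm_compl σ₁ D
          have e2 := image_perm_compl σ₂ D
          rw [himg'] at e1
          have := e1.symm.trans e2
          exact compl_injective this
        have hU : B.image σ₁ = B.image σ₂ := by
          have hB : ∀ σ : Equiv.Perm (Fin n), B.image σ = (D.image σ) \ (A.image σ) := by
            intro σ
            rw [hD, Finset.image_union, Finset.union_sdiff_cancel_left (hdisj σ)]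
          rw [hB σ₁, hB σ₂, hQ, hT']
        have hrho : rho (A.image σ₁) (B.image σ₁) = rho (A.image σ₂) (B.image σ₂) := by
          rw [hT', hU]
        have recover : ∀ σ : Equiv.Perm (Fin n),
            σ = (φ σ).trans (rho (A.image σ) (B.image σ)).symm := by
          intro σ
          simp only [hφ]
          rw [Equiv.trans_assoc, Equiv.self_trans_symm, Equiv.trans_refl]
        rw [recover σ₁, recover σ₂, h1, h2, hrho]
    refine hsub.trans ?_
    rw [Finset.card_powersetCard]
    apply Nat.choose_le_choose
    rw [Finset.card_compl, Finset.card_image_of_injective _ σ'.injective,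
      Finset.card_sdiff, Finset.inter_univ, Finset.card_univ, Fintype.card_fin,
      Nat.sub_sub_self (by simpa using D.card_le_univ), hDcard]
  have hmain := Finset.card_le_mul_card_image (f := φ) Finset.univ
    ((A.card + B.card).choose A.card) hfib
  have himgsub : (Finset.univ.image φ).card ≤
      (Finset.univ.filter
        (fun σ : Equiv.Perm (Fin n) => ∀ x ∈ A, ∀ y ∈ B, σ x < σ y)).card := by
    apply Finset.card_le_card
    intro σ' hσ'
    obtain ⟨σ, -, rfl⟩ := Finset.mem_image.mp hσ'
    exact himg σ
  calc Nat.factorial n = (Finset.univ : Finset (Equiv.Perm (Fin n))).card := by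
        rw [Finset.card_univ, Fintype.card_perm, Fintype.card_fin]
    _ ≤ (A.card + B.card).choose A.card * (Finset.univ.image φ).card := hmain
    _ ≤ _ := Nat.mul_le_mul_left _ himgsub

lemma bollobas_fin {n : ℕ} {ι : Type*} [DecidableEq ι] (s : Finset ι)
    (A B : ι → Finset (Fin n)) (a b : ℕ)
    (ha : ∀ i ∈ s, (A i).card = a) (hb : ∀ i ∈ s, (B i).card = b)
    (hd : ∀ i ∈ s, Disjoint (A i) (B i))
    (hx : ∀ i ∈ s, ∀ j ∈ s, i ≠ j → (A i ∩ B j).Nonempty) :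
    s.card ≤ (a + b).choose a := by
  classical
  set P : ι → Finset (Equiv.Perm (Fin n)) := fun i =>
    Finset.univ.filter (fun σ => ∀ x ∈ A i, ∀ y ∈ B i, σ x < σ y) with hP
  have hkey : ∀ i ∈ s, Nat.factorial n ≤ (a + b).choose a * (P i).card := by
    intro i hi
    have h := key (A i) (B i) (hd i hi)
    rwa [ha i hi, hb i hi] at h
  have hdisjP : ∀ i ∈ s, ∀ j ∈ s, i ≠ j → Disjoint (P i) (P j) := by
    intro i hi j hj hij
    rw [Finset.disjoint_left]
    intro σ hσi hσj
    rw [hP, Finset.mem_filter] at hσi hσj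
    obtain ⟨u, hu⟩ := hx i hi j hj hij
    obtain ⟨w, hw⟩ := hx j hj i hi hij.symm
    have h1 : σ u < σ w := hσi.2 u (Finset.mem_inter.mp hu).1 w (Finset.mem_inter.mp hw).2
    have h2 : σ w < σ u := hσj.2 w (Finset.mem_inter.mp hw).1 u (Finset.mem_inter.mp hu).2
    exact absurd h1 (lt_asymm h2)
  have hsum : ∑ i ∈ s, (P i).card ≤ Nat.factorial n := by
    rw [← Finset.card_biUnion hdisjP]
    calc (s.biUnion P).card ≤ (Finset.univ : Finset (Equiv.Perm (Fin n))).card :=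
          Finset.card_le_univ _
      _ = Nat.factorial n := by rw [Finset.card_univ, Fintype.card_perm, Fintype.card_fin]
  have hfin : s.card * Nat.factorial n ≤ (a + b).choose a * Nat.factorial n := by
    calc s.card * Nat.factorial n = ∑ _i ∈ s, Nat.factorial n := by
          rw [Finset.sum_const, smul_eq_mul]
      _ ≤ ∑ i ∈ s, (a + b).choose a * (P i).card := Finset.sum_le_sum hkey
      _ = (a + b).choose a * ∑ i ∈ s, (P i).card := by rw [Finset.mul_sum]
      _ ≤ (a + b).choose a * Nat.factorial n := Nat.mul_le_mul_left _ hsum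
  exact Nat.le_of_mul_le_mul_right hfin (Nat.factorial_pos n)

lemma bollobas_general {β ι : Type*} [DecidableEq β] [DecidableEq ι] (s : Finset ι)
    (A B : ι → Finset β) (a b : ℕ)
    (ha : ∀ i ∈ s, (A i).card = a) (hb : ∀ i ∈ s, (B i).card = b)
    (hd : ∀ i ∈ s, Disjoint (A i) (B i))
    (hx : ∀ i ∈ s, ∀ j ∈ s, i ≠ j → (A i ∩ B j).Nonempty) :
    s.card ≤ (a + b).choose a := by
  classical
  set S : Finset β := s.biUnion (fun i => A i ∪ B i) with hS
  have hsubA : ∀ i ∈ s, A i ⊆ S := by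
    intro i hi x hxA
    exact Finset.mem_biUnion.mpr ⟨i, hi, Finset.mem_union_left _ hxA⟩
  have hsubB : ∀ i ∈ s, B i ⊆ S := by
    intro i hi x hxB
    exact Finset.mem_biUnion.mpr ⟨i, hi, Finset.mem_union_right _ hxB⟩
  by_cases hn : S.card = 0
  · -- degenerate : s has at most one element
    have hone : s.card ≤ 1 := by
      by_contra hcon
      obtain ⟨i, hi, j, hj, hij⟩ := Finset.one_lt_card.mp (lt_of_not_ge hcon)
      obtain ⟨u, hu⟩ := hx i hi j hj hij
      have : u ∈ S := hsubA i hi (Finset.mem_inter.mp hu).1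
      rw [Finset.card_eq_zero.mp hn] at this
      exact absurd this (Finset.notMem_empty u)
    exact hone.trans (Nat.succ_le_of_lt (Nat.choose_pos (Nat.le_add_right a b)))
  · have hpos : 0 < S.card := Nat.pos_of_ne_zero hn
    have hne : Nonempty (Fin S.card) := ⟨⟨0, hpos⟩⟩
    set e : {x // x ∈ S} ≃ Fin S.card := S.equivFinOfCardEq rfl with he
    set g : β → Fin S.card := fun x => if h : x ∈ S then e ⟨x, h⟩ else Classical.arbitrary _
      with hg
    have hgS : ∀ x (h : x ∈ S), g x = e ⟨x, h⟩ := by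
      intro x h; simp [hg, dif_pos h]
    have hginj : ∀ x ∈ S, ∀ y ∈ S, g x = g y → x = y := by
      intro x hxS y hyS hxy
      rw [hgS x hxS, hgS y hyS] at hxy
      exact Subtype.mk_eq_mk.mp (e.injective hxy)
    refine bollobas_fin s (fun i => (A i).image g) (fun i => (B i).image g) a b ?_ ?_ ?_ ?_
    · intro i hi
      rw [Finset.card_image_of_injOn (fun x hxA y hyA hxy =>
        hginj x (hsubA i hi hxA) y (hsubA i hi hyA) hxy)]
      exact ha i hi
    · intro i hi
      rw [Finset.card_image_of_injOn (fun x hxB y hyB hxy =>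
        hginj x (hsubB i hi hxB) y (hsubB i hi hyB) hxy)]
      exact hb i hi
    · intro i hi
      rw [Finset.disjoint_left]
      rintro z hzA hzB
      obtain ⟨x, hxA, rfl⟩ := Finset.mem_image.mp hzA
      obtain ⟨y, hyB, hxy⟩ := Finset.mem_image.mp hzB
      have : y = x := hginj y (hsubB i hi hyB) x (hsubA i hi hxA) hxy
      exact (Finset.disjoint_left.mp (hd i hi)) hxA (this ▸ hyB)
    · intro i hi j hj hij
      obtain ⟨u, hu⟩ := hx i hi j hj hij
      rw [Finset.mem_inter] at hu
      exact ⟨g u, Finset.mem_inter.mpr ⟨Finset.mem_image_of_mem g hu.1,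
        Finset.mem_image_of_mem g hu.2⟩⟩

end TauCrit

def IsTransversal {α : Type*} [DecidableEq α] (E : Finset (Finset α)) (T : Finset α) : Prop :=
  ∀ e ∈ E, (e ∩ T).Nonempty

noncomputable def tau {α : Type*} [DecidableEq α] (V : Finset α) (E : Finset (Finset α)) : ℕ :=
  sInf {n | ∃ T ⊆ V, T.card = n ∧ IsTransversal E T}

theorem tau_critical_general_bound {α : Type*} [DecidableEq α]
    (V : Finset α) (E : Finset (Finset α)) (r t : ℕ) (htt : 2 ≤ t)
    (hE : ∀ e ∈ E, e ⊆ V ∧ e.card = r)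
    (htau : tau V E = t)
    (hdel : ∀ e ∈ E, tau V (E.erase e) ≤ t - 1) :
    E.card ≤ Nat.choose (r + t - 1) r := by
  classical
  -- every edge is nonempty
  have hedge_ne : ∀ e ∈ E, e.Nonempty := by
    intro e he
    rw [Finset.nonempty_iff_ne_empty]
    rintro rfl
    have hempty : {n | ∃ T ⊆ V, T.card = n ∧ IsTransversal E T} = ∅ := by
      rw [Set.eq_empty_iff_forall_notMem]
      rintro m ⟨T, -, -, htr⟩
      have := htr ∅ he
      simp at this
    have : tau V E = 0 := by rw [tau, hempty, Nat.sInf_empty]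
    omega
  -- extract near-transversals
  have hTe : ∀ e ∈ E, ∃ T, T ⊆ V ∧ T.card ≤ t - 1 ∧
      IsTransversal (E.erase e) T ∧ e ∩ T = ∅ := by
    intro e he
    have hVtrans : IsTransversal (E.erase e) V := by
      intro f hf
      have hfE := Finset.mem_of_mem_erase hf
      rw [Finset.inter_eq_left.mpr (hE f hfE).1]
      exact hedge_ne f hfE
    have hne : {n | ∃ T ⊆ V, T.card = n ∧ IsTransversal (E.erase e) T}.Nonempty :=
      ⟨V.card, V, Finset.Subset.refl V, rfl, hVtrans⟩
    obtain ⟨T, hTV, hTcard, hTtrans⟩ := Nat.sInf_mem hne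
    have hcard : T.card ≤ t - 1 := by
      have := hdel e he
      rw [tau] at this
      omega
    refine ⟨T, hTV, hcard, hTtrans, ?_⟩
    by_contra hcon
    have hnon : (e ∩ T).Nonempty := Finset.nonempty_iff_ne_empty.mpr hcon
    have htrans : IsTransversal E T := by
      intro f hf
      by_cases hef : f = e
      · rw [hef]; exact hnon
      · exact hTtrans f (Finset.mem_erase.mpr ⟨hef, hf⟩)
    have : tau V E ≤ T.card := Nat.sInf_le ⟨T, hTV, rfl, htrans⟩
    omega
  -- choice function
  have hTall : ∀ e : Finset α, ∃ T, e ∈ E → T ⊆ V ∧ T.card ≤ t - 1 ∧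
      IsTransversal (E.erase e) T ∧ e ∩ T = ∅ := by
    intro e
    by_cases he : e ∈ E
    · obtain ⟨T, hT⟩ := hTe e he
      exact ⟨T, fun _ => hT⟩
    · exact ⟨∅, fun h => absurd h he⟩
  choose T hT using hTall
  -- set up the Bollobás system
  set A : Finset α → Finset (α ⊕ (Finset α × ℕ)) := fun e => e.image Sum.inl with hA
  set B : Finset α → Finset (α ⊕ (Finset α × ℕ)) := fun e =>
    (T e).image Sum.inl ∪
      (Finset.range (t - 1 - (T e).card)).image (fun k => Sum.inr (e, k)) with hB
  have hmain : E.card ≤ (r + (t - 1)).choose r := by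
    refine TauCrit.bollobas_general E A B r (t - 1) ?_ ?_ ?_ ?_
    · intro e he
      rw [hA, Finset.card_image_of_injective _ Sum.inl_injective]
      exact (hE e he).2
    · intro e he
      have hdisj : Disjoint ((T e).image (Sum.inl : α → α ⊕ (Finset α × ℕ)))
          ((Finset.range (t - 1 - (T e).card)).image (fun k => Sum.inr (e, k))) := by
        rw [Finset.disjoint_left]
        rintro z hz1 hz2
        obtain ⟨x, -, rfl⟩ := Finset.mem_image.mp hz1
        obtain ⟨k, -, hk⟩ := Finset.mem_image.mp hz2
        exact Sum.inl_ne_inr hk.symm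
      rw [hB]
      rw [Finset.card_union_of_disjoint hdisj,
        Finset.card_image_of_injective _ Sum.inl_injective,
        Finset.card_image_of_injective _
          (fun k₁ k₂ h => by simpa using (Sum.inr_injective h : (e, k₁) = (e, k₂))),
        Finset.card_range]
      have := (hT e he).2.1
      omega
    · intro e he
      rw [hA, hB, Finset.disjoint_left]
      rintro z hz1 hz2
      obtain ⟨x, hx, rfl⟩ := Finset.mem_image.mp hz1
      rcases Finset.mem_union.mp hz2 with h | h
      · obtain ⟨y, hy, hxy⟩ := Finset.mem_image.mp h
        have hyx : y = x := Sum.inl_injective hxy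
        rw [hyx] at hy
        have : x ∈ e ∩ T e := Finset.mem_inter.mpr ⟨hx, hy⟩
        rw [(hT e he).2.2.2] at this
        exact absurd this (Finset.notMem_empty x)
      · obtain ⟨k, -, hk⟩ := Finset.mem_image.mp h
        exact Sum.inl_ne_inr hk.symm
    · intro e he f hf hef
      have hetrans : (e ∩ T f).Nonempty :=
        (hT f hf).2.2.1 e (Finset.mem_erase.mpr ⟨hef, he⟩)
      obtain ⟨u, hu⟩ := hetrans
      rw [Finset.mem_inter] at hu
      refine ⟨Sum.inl u, Finset.mem_inter.mpr ⟨?_, ?_⟩⟩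
      · exact Finset.mem_image_of_mem _ hu.1
      · rw [hB]
        exact Finset.mem_union_left _ (Finset.mem_image_of_mem _ hu.2)
  have : r + (t - 1) = r + t - 1 := by omega
  rwa [this] at hmain
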